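/- If μ_β = μ_δ (null-recurrent/critical case) or μ_β > μ_δ (transient case), then the chain X_{n+1} = (X_n - δ_{n+1})₊ + β_{n+1} admits no nontrivial invariant probability measure: any invariant measure solving the stationarity equation must satisfy π(0) = b₀(1 - μ_β/μ_δ) ≤ 0, forcing π ≡ 0. -/

import Mathlib

set_option maxHeartbeats 2000000

open Filter Finset

/-- Shift lemma: summing `b (y-k) * z^y` over `y ≥ k` gives `z^k * q`. -/
lemma lem_shift (b : ℕ → ℝ) (z q : ℝ) (hq : HasSum (fun j : ℕ => b j * z ^ j) q) (k : ℕ) :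
    HasSum (fun y : ℕ => (if k ≤ y then b (y - k) else 0) * z ^ y) (z ^ k * q) := by
  have hinj : Function.Injective (fun j : ℕ => k + j) := fun a c h => by simpa using h
  have hvan : ∀ y ∉ Set.range (fun j : ℕ => k + j),
      (if k ≤ y then b (y - k) else 0) * z ^ y = 0 := by
    intro y hy
    have : ¬ k ≤ y := by
      intro h
      exact hy ⟨y - k, by simp; omega⟩
    simp [this]
  rw [← Function.Injective.hasSum_iff hinj hvan]
  have h := hq.mul_left (z ^ k)
  convert h using 1
  · rfl
  funext j
  simp only [Function.comp]
  rw [if_pos (Nat.le_add_right k j)]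
  have : k + j - k = j := by omega
  rw [this, pow_add]
  ring

section Akernel

variable {α z : ℝ}

lemma lem_A_summable (hα0 : 0 < α) (hα1 : α < 1) (hz0 : 0 ≤ z) (hz1 : z ≤ 1) (x : ℕ) :
    Summable (fun d : ℕ => α * (1 - α) ^ d * z ^ (x - d)) := by
  have hα' : 0 ≤ 1 - α := by linarith
  have hα'' : 1 - α < 1 := by linarith
  refine Summable.of_nonneg_of_le (fun d => ?_) (fun d => ?_)
    ((summable_geometric_of_lt_one hα' hα'').mul_left α)
  · positivity
  · have h1 : z ^ (x - d) ≤ 1 := pow_le_one₀ hz0 hz1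
    have h2 : 0 ≤ α * (1 - α) ^ d := by positivity
    calc α * (1 - α) ^ d * z ^ (x - d) ≤ α * (1 - α) ^ d * 1 := by
          exact mul_le_mul_of_nonneg_left h1 h2
      _ = α * (1 - α) ^ d := by ring

lemma lem_A_nonneg (hα0 : 0 < α) (hα1 : α < 1) (hz0 : 0 ≤ z) (x : ℕ) :
    0 ≤ ∑' d : ℕ, α * (1 - α) ^ d * z ^ (x - d) := by
  have hα' : 0 ≤ 1 - α := by linarith
  exact tsum_nonneg (fun d => by positivity)

lemma lem_A_le_one (hα0 : 0 < α) (hα1 : α < 1) (hz0 : 0 ≤ z) (hz1 : z ≤ 1) (x : ℕ) :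
    (∑' d : ℕ, α * (1 - α) ^ d * z ^ (x - d)) ≤ 1 := by
  have hα' : 0 ≤ 1 - α := by linarith
  have hα'' : 1 - α < 1 := by linarith
  have hg : HasSum (fun d : ℕ => α * (1 - α) ^ d) 1 := by
    have := (hasSum_geometric_of_lt_one hα' hα'').mul_left α
    convert this using 2
    · rfl
    field_simp
    rw [sub_sub_cancel, div_self hα0.ne']
  refine le_trans (Summable.tsum_le_tsum (fun d => ?_) (lem_A_summable hα0 hα1 hz0 hz1 x)
    hg.summable) (le_of_eq hg.tsum_eq)
  have h1 : z ^ (x - d) ≤ 1 := pow_le_one₀ hz0 hz1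
  have h2 : 0 ≤ α * (1 - α) ^ d := by positivity
  calc α * (1 - α) ^ d * z ^ (x - d) ≤ α * (1 - α) ^ d * 1 :=
        mul_le_mul_of_nonneg_left h1 h2
    _ = α * (1 - α) ^ d := by ring

lemma lem_A_closed (hα0 : 0 < α) (hα1 : α < 1) (hz0 : 0 ≤ z) (hz1 : z ≤ 1) (x : ℕ) :
    (z - (1 - α)) * (∑' d : ℕ, α * (1 - α) ^ d * z ^ (x - d))
      = α * z ^ (x + 1) - (1 - α) * (1 - z) * (1 - α) ^ x := by
  induction x with
  | zero =>
    have : (fun d : ℕ => α * (1 - α) ^ d * z ^ (0 - d)) = fun d : ℕ => α * (1 - α) ^ d := by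
      funext d
      simp [Nat.zero_sub]
    rw [this]
    have hα' : 0 ≤ 1 - α := by linarith
    have hα'' : 1 - α < 1 := by linarith
    have hg : HasSum (fun d : ℕ => α * (1 - α) ^ d) 1 := by
      have := (hasSum_geometric_of_lt_one hα' hα'').mul_left α
      convert this using 2
      · rfl
      field_simp
      rw [sub_sub_cancel, div_self hα0.ne']
    rw [hg.tsum_eq]
    ring
  | succ x ih =>
    have hs := lem_A_summable hα0 hα1 hz0 hz1 (x + 1)
    rw [Summable.tsum_eq_zero_add hs]
    have he : (fun d : ℕ => α * (1 - α) ^ (d + 1) * z ^ (x + 1 - (d + 1)))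
        = fun d : ℕ => (1 - α) * (α * (1 - α) ^ d * z ^ (x - d)) := by
      funext d
      have : x + 1 - (d + 1) = x - d := by omega
      rw [this]
      ring
    simp only [he]
    rw [tsum_mul_left]
    have h0 : α * (1 - α) ^ (0:ℕ) * z ^ (x + 1 - 0) = α * z ^ (x + 1) := by
      simp
    rw [h0]
    linear_combination (1 - α) * ih

lemma lem_rowsum {q : ℝ} (hα0 : 0 < α) (hα1 : α < 1) (hz0 : 0 ≤ z) (hz1 : z ≤ 1)
    (b : ℕ → ℝ) (hbnn : ∀ n, 0 ≤ b n) (hq : HasSum (fun j : ℕ => b j * z ^ j) q) (x : ℕ) :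
    HasSum (fun y : ℕ =>
        (∑' d : ℕ, α * (1 - α) ^ d * (if x - d ≤ y then b (y - (x - d)) else 0)) * z ^ y)
      ((∑' d : ℕ, α * (1 - α) ^ d * z ^ (x - d)) * q) := by
  have hq0 : 0 ≤ q := hq.nonneg (fun j => mul_nonneg (hbnn j) (pow_nonneg hz0 j))
  set f : ℕ → ℕ → ℝ := fun d y =>
    α * (1 - α) ^ d * (if x - d ≤ y then b (y - (x - d)) else 0) * z ^ y with hf
  have hfnn : ∀ d y, 0 ≤ f d y := by
    intro d y
    have hite : 0 ≤ (if x - d ≤ y then b (y - (x - d)) else 0) := by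
      split
      · exact hbnn _
      · exact le_refl 0
    have h1a : 0 ≤ (1 - α : ℝ) := by linarith
    exact mul_nonneg (mul_nonneg (mul_nonneg hα0.le (pow_nonneg h1a d)) hite)
      (pow_nonneg hz0 y)
  have h1 : ∀ d, HasSum (f d) (α * (1 - α) ^ d * z ^ (x - d) * q) := by
    intro d
    have := (lem_shift b z q hq (x - d)).mul_left (α * (1 - α) ^ d)
    convert this using 1
    · rfl
    · funext y
      simp only [hf]
      ring
    · ring
  have h2 : Summable (fun d => ∑' y, f d y) := by
    have : (fun d => ∑' y, f d y) = fun d => α * (1 - α) ^ d * z ^ (x - d) * q := by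
      funext d
      exact (h1 d).tsum_eq
    rw [this]
    exact (lem_A_summable hα0 hα1 hz0 hz1 x).mul_right q
  have hF : Summable (Function.uncurry f) := by
    exact (summable_prod_of_nonneg (f := Function.uncurry f)
      (fun p => hfnn p.1 p.2)).mpr ⟨fun d => (h1 d).summable, h2⟩
  have hswap : Summable (fun y => ∑' d, f d y) := by
    have := hF.prod_symm.prod
    simpa using this
  have hcomm : ∑' y, ∑' d, f d y = ∑' d, ∑' y, f d y := Summable.tsum_comm hF
  have hval : (∑' d, ∑' y, f d y) = (∑' d : ℕ, α * (1 - α) ^ d * z ^ (x - d)) * q := by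
    rw [show (fun d => ∑' y, f d y) = fun d => α * (1 - α) ^ d * z ^ (x - d) * q from
      funext fun d => (h1 d).tsum_eq]
    exact tsum_mul_right
  have hgoal : ∀ y, (∑' d : ℕ, α * (1 - α) ^ d * (if x - d ≤ y then b (y - (x - d)) else 0)) * z ^ y
      = ∑' d, f d y := by
    intro y
    rw [← tsum_mul_right]
  have := hswap.hasSum
  rw [hcomm, hval] at this
  convert this using 1
  funext y
  exact hgoal y

end Akernel

lemma lem_geom (z : ℝ) (hz0 : 0 ≤ z) (hz1 : z ≤ 1) (k : ℕ) :
    ((k : ℝ) + 1) * (1 - z) * z ^ k ≤ 1 - z ^ (k + 1) := by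
  have h1 : (∑ i ∈ Finset.range (k + 1), z ^ i) * (z - 1) = z ^ (k + 1) - 1 :=
    geom_sum_mul z (k + 1)
  have h3 : ((k : ℝ) + 1) * z ^ k ≤ ∑ i ∈ Finset.range (k + 1), z ^ i := by
    have h2 : ∀ i ∈ Finset.range (k + 1), z ^ k ≤ z ^ i := by
      intro i hi
      exact pow_le_pow_of_le_one hz0 hz1 (by simp at hi; omega)
    calc ((k : ℝ) + 1) * z ^ k = ∑ _i ∈ Finset.range (k + 1), z ^ k := by
          rw [Finset.sum_const, Finset.card_range, nsmul_eq_mul]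
          push_cast
          ring
      _ ≤ ∑ i ∈ Finset.range (k + 1), z ^ i := Finset.sum_le_sum h2
  have h4 := mul_le_mul_of_nonneg_right h3 (by linarith : (0:ℝ) ≤ 1 - z)
  nlinarith [h4, h1]

/-- If `μ_β ≥ μ_δ = ᾱ/α` (null-recurrent or transient case), the chain
`X_{n+1} = (X_n - δ_{n+1})₊ + β_{n+1}` (with transition matrix
`P(x,y) = Σ_d α ᾱ^d · b_{y-(x-d)₊}`) admits no invariant probability measure. -/
theorem stmt9 (α : ℝ) (hα0 : 0 < α) (hα1 : α < 1)
    (b : ℕ → ℝ) (hbnn : ∀ n, 0 ≤ b n) (hbsum : HasSum b 1)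
    (hb00 : 0 < b 0) (hb01 : b 0 < 1)
    (μβ : ℝ) (hμβ : HasSum (fun n : ℕ => (n : ℝ) * b n) μβ)
    (hcrit : (1 - α) / α ≤ μβ)
    (P : ℕ → ℕ → ℝ)
    (hP : ∀ x y, P x y =
      ∑' d : ℕ, α * (1 - α) ^ d * (if x - d ≤ y then b (y - (x - d)) else 0)) :
    ¬ ∃ π : ℕ → ℝ, (∀ x, 0 ≤ π x) ∧ HasSum π 1 ∧
        ∀ y : ℕ, (∑' x : ℕ, π x * P x y) = π y := by
  rintro ⟨π, hπnn, hπsum, hstat⟩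
  -- basic facts
  have hπs : Summable π := hπsum.summable
  have hΦs : ∀ z : ℝ, 0 ≤ z → z ≤ 1 → Summable (fun x : ℕ => π x * z ^ x) := by
    intro z hz0 hz1
    refine Summable.of_nonneg_of_le (fun x => mul_nonneg (hπnn x) (pow_nonneg hz0 x))
      (fun x => mul_le_of_le_one_right (hπnn x) (pow_le_one₀ hz0 hz1)) hπs
  have hqs : ∀ z : ℝ, 0 ≤ z → z ≤ 1 → Summable (fun k : ℕ => b k * z ^ k) := by
    intro z hz0 hz1
    refine Summable.of_nonneg_of_le (fun k => mul_nonneg (hbnn k) (pow_nonneg hz0 k))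
      (fun k => mul_le_of_le_one_right (hbnn k) (pow_le_one₀ hz0 hz1)) hbsum.summable
  have hμβ1 : HasSum (fun k : ℕ => ((k : ℝ) + 1) * b k) (μβ + 1) := by
    have h := hμβ.add hbsum
    convert h using 1
    funext k
    ring
  have hψs : ∀ z : ℝ, 0 ≤ z → z ≤ 1 → Summable (fun k : ℕ => ((k : ℝ) + 1) * b k * z ^ k) := by
    intro z hz0 hz1
    refine Summable.of_nonneg_of_le
      (fun k => mul_nonneg (mul_nonneg (by positivity) (hbnn k)) (pow_nonneg hz0 k))
      (fun k => mul_le_of_le_one_right (mul_nonneg (by positivity) (hbnn k))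
        (pow_le_one₀ hz0 hz1)) hμβ1.summable
  have hPnn : ∀ x y, 0 ≤ P x y := by
    intro x y
    rw [hP]
    refine tsum_nonneg (fun d => ?_)
    have hite : 0 ≤ (if x - d ≤ y then b (y - (x - d)) else 0) := by
      split
      · exact hbnn _
      · exact le_refl 0
    have h1a : 0 ≤ (1 - α : ℝ) := by linarith
    positivity
  -- positivity of Φ at 1-α
  have hΦann : 0 ≤ ∑' x : ℕ, π x * (1 - α) ^ x :=
    tsum_nonneg (fun x => mul_nonneg (hπnn x) (pow_nonneg (by linarith) x))
  have hx0 : ∃ x, 0 < π x := by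
    by_contra h
    push_neg at h
    have hz : ∀ x, π x = 0 := fun x => le_antisymm (h x) (hπnn x)
    have : (1 : ℝ) = 0 := by
      have h0 : HasSum π 0 := by
        have : π = fun _ => (0:ℝ) := funext hz
        rw [this]
        exact hasSum_zero
      exact hπsum.unique h0
    norm_num at this
  obtain ⟨x₀, hx₀⟩ := hx0
  have hΦapos : 0 < ∑' x : ℕ, π x * (1 - α) ^ x := by
    have hle := Summable.le_tsum (hΦs (1 - α) (by linarith) (by linarith)) x₀
      (fun j _ => mul_nonneg (hπnn j) (pow_nonneg (by linarith) j))
    have : 0 < π x₀ * (1 - α) ^ x₀ := mul_pos hx₀ (pow_pos (by linarith) x₀)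
    linarith
  -- the key inequality for every z ∈ (0,1)
  have hstar : ∀ z : ℝ, 0 < z → z < 1 →
      α * ((∑' k : ℕ, ((k : ℝ) + 1) * b k * z ^ k) * (∑' x : ℕ, π x * z ^ x))
        + (1 - α) * b 0 * (∑' x : ℕ, π x * (1 - α) ^ x) ≤ 1 := by
    intro z hz0 hz1
    set q := ∑' j : ℕ, b j * z ^ j with hqdef
    have hqsum : HasSum (fun j : ℕ => b j * z ^ j) q := (hqs z hz0.le hz1.le).hasSum
    set Φz := ∑' x : ℕ, π x * z ^ x with hΦzdef
    have hΦzsum : HasSum (fun x : ℕ => π x * z ^ x) Φz := (hΦs z hz0.le hz1.le).hasSum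
    set Φa := ∑' x : ℕ, π x * (1 - α) ^ x with hΦadef
    have hΦasum : HasSum (fun x : ℕ => π x * (1 - α) ^ x) Φa :=
      (hΦs (1 - α) (by linarith) (by linarith)).hasSum
    set A := fun x : ℕ => ∑' d : ℕ, α * (1 - α) ^ d * z ^ (x - d) with hAdef
    have hrow : ∀ x : ℕ, HasSum (fun y : ℕ => π x * (P x y * z ^ y)) (π x * (A x * q)) := by
      intro x
      have h := lem_rowsum hα0 hα1 hz0.le hz1.le b hbnn hqsum x
      have h2 : (fun y : ℕ =>
          (∑' d : ℕ, α * (1 - α) ^ d * (if x - d ≤ y then b (y - (x - d)) else 0)) * z ^ y)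
          = fun y => P x y * z ^ y := by
        funext y
        rw [hP x y]
      rw [h2] at h
      exact h.mul_left (π x)
    have hAnn : ∀ x, 0 ≤ A x := fun x => lem_A_nonneg hα0 hα1 hz0.le x
    have hAle : ∀ x, A x ≤ 1 := fun x => lem_A_le_one hα0 hα1 hz0.le hz1.le x
    have hq0 : 0 ≤ q := tsum_nonneg (fun j => mul_nonneg (hbnn j) (pow_nonneg hz0.le j))
    have hqb0 : b 0 ≤ q := by
      have := Summable.le_tsum (hqs z hz0.le hz1.le) 0
        (fun j _ => mul_nonneg (hbnn j) (pow_nonneg hz0.le j))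
      simpa using this
    have hqle1 : q ≤ 1 := by
      have h := Summable.tsum_le_tsum
        (fun k => mul_le_of_le_one_right (hbnn k) (pow_le_one₀ hz0.le hz1.le))
        (hqs z hz0.le hz1.le) hbsum.summable
      rw [hbsum.tsum_eq] at h
      exact h
    have hG2 : Summable (fun x : ℕ => π x * (A x * q)) := by
      refine Summable.of_nonneg_of_le
        (fun x => mul_nonneg (hπnn x) (mul_nonneg (hAnn x) hq0))
        (fun x => ?_) (hπs.mul_right q)
      calc π x * (A x * q) ≤ π x * (1 * q) := by
            refine mul_le_mul_of_nonneg_left ?_ (hπnn x)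
            exact mul_le_mul_of_nonneg_right (hAle x) hq0
        _ = π x * q := by ring
    have hHsum : Summable (Function.uncurry (fun x y : ℕ => π x * (P x y * z ^ y))) := by
      refine (summable_prod_of_nonneg ?_).mpr ⟨fun x => (hrow x).summable, ?_⟩
      · intro p
        exact mul_nonneg (hπnn p.1) (mul_nonneg (hPnn p.1 p.2) (pow_nonneg hz0.le p.2))
      · exact hG2.congr (fun x => ((hrow x).tsum_eq).symm)
    have hmaster : Φz = ∑' x : ℕ, π x * (A x * q) := by
      have hcomm := Summable.tsum_comm (f := fun x y : ℕ => π x * (P x y * z ^ y)) hHsum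
      have hleft : ∑' y : ℕ, ∑' x : ℕ, π x * (P x y * z ^ y) = Φz := by
        have hy : ∀ y : ℕ, ∑' x : ℕ, π x * (P x y * z ^ y) = π y * z ^ y := by
          intro y
          have h1 : (fun x => π x * (P x y * z ^ y)) = fun x => (π x * P x y) * z ^ y :=
            funext fun x => by ring
          rw [h1, tsum_mul_right, hstat y]
        rw [tsum_congr hy]
      have hright : ∑' x : ℕ, ∑' y : ℕ, π x * (P x y * z ^ y) = ∑' x : ℕ, π x * (A x * q) :=
        tsum_congr fun x => (hrow x).tsum_eq
      rw [← hleft, hcomm, hright]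
    have hmain : α * z * q * Φz - (1 - α) * (1 - z) * q * Φa = (z - (1 - α)) * Φz := by
      have h1 : HasSum (fun x : ℕ => π x * q * (α * z ^ (x + 1) - (1 - α) * (1 - z) * (1 - α) ^ x))
          (α * z * q * Φz - (1 - α) * (1 - z) * q * Φa) := by
        have ha := (hΦzsum.mul_left (α * z * q)).sub (hΦasum.mul_left ((1 - α) * (1 - z) * q))
        convert ha using 1
        · rfl
        funext x
        rw [pow_succ]
        ring
      have h2 : (fun x : ℕ => π x * q * (α * z ^ (x + 1) - (1 - α) * (1 - z) * (1 - α) ^ x))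
          = fun x : ℕ => (z - (1 - α)) * (π x * (A x * q)) := by
        funext x
        rw [← lem_A_closed hα0 hα1 hz0.le hz1.le x]
        simp only [hAdef]
        ring
      rw [h2] at h1
      have h3 := hG2.hasSum.mul_left (z - (1 - α))
      rw [← hmaster] at h3
      exact h1.unique h3
    -- lower bound 1 - z q ≥ (1-z) ψ
    set ψ := ∑' k : ℕ, ((k : ℝ) + 1) * b k * z ^ k with hψdef
    have hψsum : HasSum (fun k : ℕ => ((k : ℝ) + 1) * b k * z ^ k) ψ :=
      (hψs z hz0.le hz1.le).hasSum
    have hψnn : 0 ≤ ψ := tsum_nonneg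
      (fun k => mul_nonneg (mul_nonneg (by positivity) (hbnn k)) (pow_nonneg hz0.le k))
    have hlow : (1 - z) * ψ ≤ 1 - z * q := by
      have hzq : HasSum (fun k : ℕ => b k * z ^ (k + 1)) (z * q) := by
        have h := hqsum.mul_left z
        convert h using 1
        · rfl
        funext k
        rw [pow_succ]
        ring
      have hdiff : HasSum (fun k : ℕ => b k - b k * z ^ (k + 1)) (1 - z * q) := hbsum.sub hzq
      have hptw : ∀ k : ℕ, (1 - z) * (((k : ℝ) + 1) * b k * z ^ k) ≤ b k - b k * z ^ (k + 1) := by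
        intro k
        have hg := lem_geom z hz0.le hz1.le k
        nlinarith [hbnn k, hg]
      have hls : Summable (fun k : ℕ => (1 - z) * (((k : ℝ) + 1) * b k * z ^ k)) :=
        (hψs z hz0.le hz1.le).mul_left (1 - z)
      have h := Summable.tsum_le_tsum hptw hls hdiff.summable
      rw [tsum_mul_left, hdiff.tsum_eq] at h
      exact h
    -- assemble
    have hΦznn : 0 ≤ Φz := tsum_nonneg (fun x => mul_nonneg (hπnn x) (pow_nonneg hz0.le x))
    have hΦann' : 0 ≤ Φa := hΦann
    have hΦzle1 : Φz ≤ 1 := by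
      have h := Summable.tsum_le_tsum
        (fun x => mul_le_of_le_one_right (hπnn x) (pow_le_one₀ hz0.le hz1.le))
        (hΦs z hz0.le hz1.le) hπs
      rw [hπsum.tsum_eq] at h
      exact h
    have hID : α * Φz * (1 - z * q) + (1 - α) * (1 - z) * (q * Φa) = Φz * (1 - z) := by
      linear_combination -hmain
    have step1 : α * Φz * ((1 - z) * ψ) + (1 - α) * (1 - z) * (b 0 * Φa)
        ≤ α * Φz * (1 - z * q) + (1 - α) * (1 - z) * (q * Φa) := by
      have t1 : α * Φz * ((1 - z) * ψ) ≤ α * Φz * (1 - z * q) :=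
        mul_le_mul_of_nonneg_left hlow (by positivity)
      have t2 : (1 - α) * (1 - z) * (b 0 * Φa) ≤ (1 - α) * (1 - z) * (q * Φa) := by
        refine mul_le_mul_of_nonneg_left ?_ (by nlinarith)
        exact mul_le_mul_of_nonneg_right hqb0 hΦann'
      linarith
    have hfin : (1 - z) * (α * (ψ * Φz) + (1 - α) * b 0 * Φa) ≤ (1 - z) * 1 := by
      calc (1 - z) * (α * (ψ * Φz) + (1 - α) * b 0 * Φa)
          = α * Φz * ((1 - z) * ψ) + (1 - α) * (1 - z) * (b 0 * Φa) := by ring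
        _ ≤ α * Φz * (1 - z * q) + (1 - α) * (1 - z) * (q * Φa) := step1
        _ = Φz * (1 - z) := hID
        _ ≤ 1 * (1 - z) := mul_le_mul_of_nonneg_right hΦzle1 (by linarith)
        _ = (1 - z) * 1 := by ring
    exact le_of_mul_le_mul_left hfin (by linarith : (0:ℝ) < 1 - z)
  -- finite truncation bound
  set ε := (1 - α) * b 0 * (∑' x : ℕ, π x * (1 - α) ^ x) with hεdef
  have hεpos : 0 < ε := by
    have h1 : (0:ℝ) < 1 - α := by linarith
    exact mul_pos (mul_pos h1 hb00) hΦapos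
  have hN : ∀ N : ℕ,
      α * ((∑ k ∈ Finset.range N, ((k : ℝ) + 1) * b k) * (∑ x ∈ Finset.range N, π x)) + ε ≤ 1 := by
    intro N
    set C := ∑ k ∈ Finset.range N, ((k : ℝ) + 1) * b k with hCdef
    set D := ∑ x ∈ Finset.range N, π x with hDdef
    have hC0 : 0 ≤ C := Finset.sum_nonneg fun k _ => mul_nonneg (by positivity) (hbnn k)
    have hD0 : 0 ≤ D := Finset.sum_nonneg fun x _ => hπnn x
    -- the sequence z_m
    have hkeyz : ∀ m : ℕ, α * ((1 - α / ((m:ℝ) + 2)) ^ N * C * ((1 - α / ((m:ℝ) + 2)) ^ N * D)) + ε ≤ 1 := by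
      intro m
      set z := 1 - α / ((m:ℝ) + 2) with hzdef
      have hm2 : (0:ℝ) < (m:ℝ) + 2 := by positivity
      have hfrac0 : 0 < α / ((m:ℝ) + 2) := by positivity
      have hfrac1 : α / ((m:ℝ) + 2) < 1 := by
        rw [div_lt_one hm2]
        linarith [Nat.cast_nonneg (α := ℝ) m]
      have hz0 : 0 < z := by simp only [hzdef]; linarith
      have hz1 : z < 1 := by simp only [hzdef]; linarith
      have hs := hstar z hz0 hz1
      -- ψ z ≥ z^N * C
      have hψge : z ^ N * C ≤ ∑' k : ℕ, ((k : ℝ) + 1) * b k * z ^ k := by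
        have h1 : ∑ k ∈ Finset.range N, z ^ N * (((k : ℝ) + 1) * b k)
            ≤ ∑ k ∈ Finset.range N, ((k : ℝ) + 1) * b k * z ^ k := by
          refine Finset.sum_le_sum fun k hk => ?_
          have hkN : k ≤ N := by simp at hk; omega
          have : z ^ N ≤ z ^ k := pow_le_pow_of_le_one hz0.le hz1.le hkN
          nlinarith [mul_nonneg (by positivity : (0:ℝ) ≤ (k:ℝ)+1) (hbnn k)]
        have h2 : ∑ k ∈ Finset.range N, ((k : ℝ) + 1) * b k * z ^ k
            ≤ ∑' k : ℕ, ((k : ℝ) + 1) * b k * z ^ k :=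
          Summable.sum_le_tsum _ (fun k _ => mul_nonneg (mul_nonneg (by positivity) (hbnn k))
            (pow_nonneg hz0.le k)) (hψs z hz0.le hz1.le)
        calc z ^ N * C = ∑ k ∈ Finset.range N, z ^ N * (((k : ℝ) + 1) * b k) := by
              rw [Finset.mul_sum]
          _ ≤ _ := le_trans h1 h2
      -- Φ z ≥ z^N * D
      have hΦge : z ^ N * D ≤ ∑' x : ℕ, π x * z ^ x := by
        have h1 : ∑ x ∈ Finset.range N, z ^ N * π x
            ≤ ∑ x ∈ Finset.range N, π x * z ^ x := by
          refine Finset.sum_le_sum fun x hx => ?_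
          have hxN : x ≤ N := by simp at hx; omega
          have : z ^ N ≤ z ^ x := pow_le_pow_of_le_one hz0.le hz1.le hxN
          nlinarith [hπnn x]
        have h2 : ∑ x ∈ Finset.range N, π x * z ^ x ≤ ∑' x : ℕ, π x * z ^ x :=
          Summable.sum_le_tsum _ (fun x _ => mul_nonneg (hπnn x) (pow_nonneg hz0.le x))
            (hΦs z hz0.le hz1.le)
        calc z ^ N * D = ∑ x ∈ Finset.range N, z ^ N * π x := by rw [Finset.mul_sum]
          _ ≤ _ := le_trans h1 h2
      have hznn : (0:ℝ) ≤ z ^ N := pow_nonneg hz0.le N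
      have hmul : z ^ N * C * (z ^ N * D)
          ≤ (∑' k : ℕ, ((k : ℝ) + 1) * b k * z ^ k) * (∑' x : ℕ, π x * z ^ x) := by
        refine mul_le_mul hψge hΦge (by positivity) ?_
        exact tsum_nonneg (fun k => mul_nonneg (mul_nonneg (by positivity) (hbnn k))
          (pow_nonneg hz0.le k))
      nlinarith [hs, hmul]
    -- pass to the limit m → ∞
    have hzt : Tendsto (fun m : ℕ => 1 - α / ((m:ℝ) + 2)) atTop (nhds 1) := by
      have h2 : Tendsto (fun m : ℕ => ((m:ℝ) + 2)) atTop atTop :=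
        tendsto_atTop_add_const_right atTop 2 tendsto_natCast_atTop_atTop
      have h3 : Tendsto (fun m : ℕ => α / ((m:ℝ) + 2)) atTop (nhds 0) :=
        Tendsto.div_atTop tendsto_const_nhds h2
      have := h3.const_sub (1:ℝ)
      simpa using this
    have hlimit : Tendsto
        (fun m : ℕ => α * ((1 - α / ((m:ℝ) + 2)) ^ N * C * ((1 - α / ((m:ℝ) + 2)) ^ N * D)) + ε)
        atTop (nhds (α * (1 ^ N * C * (1 ^ N * D)) + ε)) := by
      exact (((((hzt.pow N).mul_const C).mul ((hzt.pow N).mul_const D)).const_mul α).add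
        tendsto_const_nhds)
    have := le_of_tendsto hlimit (Eventually.of_forall hkeyz)
    simpa using this
  -- pass to the limit N → ∞
  have hCt : Tendsto (fun N : ℕ => ∑ k ∈ Finset.range N, ((k : ℝ) + 1) * b k) atTop
      (nhds (μβ + 1)) := hμβ1.tendsto_sum_nat
  have hDt : Tendsto (fun N : ℕ => ∑ x ∈ Finset.range N, π x) atTop (nhds 1) :=
    hπsum.tendsto_sum_nat
  have hlim2 : Tendsto (fun N : ℕ =>
      α * ((∑ k ∈ Finset.range N, ((k : ℝ) + 1) * b k) * (∑ x ∈ Finset.range N, π x)) + ε)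
      atTop (nhds (α * ((μβ + 1) * 1) + ε)) :=
    (((hCt.mul hDt).const_mul α).add tendsto_const_nhds)
  have hfinal : α * ((μβ + 1) * 1) + ε ≤ 1 := le_of_tendsto hlim2 (Eventually.of_forall hN)
  have hprod : α * ((1 - α) / α + 1) ≤ α * (μβ + 1) :=
    mul_le_mul_of_nonneg_left (by linarith) hα0.le
  have hone : α * ((1 - α) / α + 1) = 1 := by field_simp; ring
  nlinarith [hεpos, hfinal, hprod, hone]
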